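/- Let a be an integer, α a real number with 0 < α < 1, and u : ℤ → ℝ. For each ω > 0 let z(ω, ·) : ℤ → ℝ satisfy z(ω, a) = 0 and z(ω, k) − z(ω, k−1) = −ω² z(ω, k) + u(k) for every integer k ≥ a+1. Then for every integer k ≥ a+1, the function ω ↦ ω μ_α(ω²) z(ω, k) is integrable on (0, +∞) and 2 ∫_0^{+∞} ω μ_α(ω²) z(ω, k) dω = {}_a∇_k^{-α} u(k). (Equivalence of the fractional sum with the output-form bilateral frequency distributed model, restricted to positive frequencies.) -/

import Mathlib

open MeasureTheory Set

lemma realBeta {p q : ℝ} (hp : 0 < p) (hq : 0 < q) :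
    IntegrableOn (fun x : ℝ => x ^ (p-1) * (1-x) ^ (q-1)) (Ioo (0:ℝ) 1) ∧
    ∫ x in Ioo (0:ℝ) 1, x ^ (p-1) * (1-x) ^ (q-1) =
      Real.Gamma p * Real.Gamma q / Real.Gamma (p+q) := by
  have key : ∀ x ∈ Ioo (0:ℝ) 1,
      ((x:ℂ)) ^ ((p:ℂ)-1) * ((1:ℂ)-(x:ℂ)) ^ ((q:ℂ)-1)
        = ((x ^ (p-1) * (1-x) ^ (q-1) : ℝ) : ℂ) := by
    intro x hx
    rw [Complex.ofReal_mul, Complex.ofReal_cpow hx.1.le, Complex.ofReal_cpow (by linarith [hx.2])]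
    push_cast
    ring
  have hc := Complex.betaIntegral_convergent (u := (p:ℂ)) (v := (q:ℂ))
    (by simpa using hp) (by simpa using hq)
  have hIoc : IntegrableOn (fun x : ℝ => (x:ℂ) ^ ((p:ℂ)-1) * ((1:ℂ)-(x:ℂ)) ^ ((q:ℂ)-1))
      (Ioc (0:ℝ) 1) := by
    rwa [intervalIntegrable_iff_integrableOn_Ioc_of_le zero_le_one] at hc
  have hIoo : IntegrableOn (fun x : ℝ => ((x ^ (p-1) * (1-x) ^ (q-1) : ℝ) : ℂ))
      (Ioo (0:ℝ) 1) :=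
    ((hIoc.mono_set Ioo_subset_Ioc_self).congr_fun key measurableSet_Ioo)
  have hreal : IntegrableOn (fun x : ℝ => x ^ (p-1) * (1-x) ^ (q-1)) (Ioo (0:ℝ) 1) := by
    simpa [IntegrableOn] using hIoo.re
  refine ⟨hreal, ?_⟩
  have hG := Complex.Gamma_mul_Gamma_eq_betaIntegral (s := (p:ℂ)) (t := (q:ℂ))
    (by simpa using hp) (by simpa using hq)
  have hb : Complex.betaIntegral p q = ((∫ x in Ioo (0:ℝ) 1, x ^ (p-1) * (1-x) ^ (q-1) : ℝ) : ℂ) := by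
    rw [Complex.betaIntegral, intervalIntegral.integral_of_le zero_le_one,
      integral_Ioc_eq_integral_Ioo, setIntegral_congr_fun measurableSet_Ioo key]
    exact integral_ofReal
  rw [hb] at hG
  have hGpq : Real.Gamma (p+q) ≠ 0 := (Real.Gamma_pos_of_pos (by linarith)).ne'
  rw [show ((p:ℂ) + q) = ((p+q : ℝ) : ℂ) by push_cast; ring] at hG
  rw [Complex.Gamma_ofReal, Complex.Gamma_ofReal, Complex.Gamma_ofReal] at hG
  have h2 : Real.Gamma p * Real.Gamma q
      = Real.Gamma (p+q) * ∫ x in Ioo (0:ℝ) 1, x ^ (p-1) * (1-x) ^ (q-1) := by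
    exact_mod_cast hG
  field_simp
  linarith [h2]

lemma betaIoi {p q : ℝ} (hp : 0 < p) (hq : 0 < q) :
    IntegrableOn (fun t : ℝ => t ^ (p-1) * (1+t) ^ (-(p+q))) (Ioi (0:ℝ)) ∧
    ∫ t in Ioi (0:ℝ), t ^ (p-1) * (1+t) ^ (-(p+q)) =
      Real.Gamma p * Real.Gamma q / Real.Gamma (p+q) := by
  set g : ℝ → ℝ := fun x => x ^ (p-1) * (1-x) ^ (q-1) with hg
  set f : ℝ → ℝ := fun t => t / (1+t) with hf
  have hf' : ∀ t ∈ Ioi (0:ℝ), HasDerivWithinAt f (((1+t)^2)⁻¹) (Ioi 0) t := by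
    intro t ht
    have h1 : (0:ℝ) < 1 + t := by simp at ht; linarith
    have := (hasDerivAt_id t).div ((hasDerivAt_id t).const_add 1) h1.ne'
    simp only [id] at this
    rw [show ((1+t)^2)⁻¹ = (1 * (1 + t) - t * 1) / (1 + t) ^ 2 by ring]
    exact this.hasDerivWithinAt
  have hinj : InjOn f (Ioi (0:ℝ)) := by
    intro x hx y hy h
    simp only [hf, mem_Ioi] at *
    have hx1 : (0:ℝ) < 1 + x := by linarith
    have hy1 : (0:ℝ) < 1 + y := by linarith
    field_simp at h
    linarith
  have himg : f '' (Ioi (0:ℝ)) = Ioo (0:ℝ) 1 := by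
    ext y
    constructor
    · rintro ⟨t, ht, rfl⟩
      simp only [mem_Ioi] at ht
      have h1 : (0:ℝ) < 1 + t := by linarith
      constructor
      · positivity
      · rw [div_lt_one h1]; linarith
    · rintro ⟨hy0, hy1⟩
      refine ⟨y / (1-y), by simp only [mem_Ioi]; exact div_pos hy0 (by linarith), ?_⟩
      have h1y : (0:ℝ) < 1 - y := by linarith
      have h1y' : (1:ℝ) - y ≠ 0 := h1y.ne'
      have e : (1:ℝ) + y/(1-y) = 1/(1-y) := by field_simp; ring
      rw [show f (y/(1-y)) = y/(1-y) / (1 + y/(1-y)) from rfl, e]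
      field_simp
  have hpt : ∀ t ∈ Ioi (0:ℝ),
      |((1+t)^2)⁻¹| • g (f t) = t ^ (p-1) * (1+t) ^ (-(p+q)) := by
    intro t ht
    simp only [mem_Ioi] at ht
    have h1 : (0:ℝ) < 1 + t := by linarith
    have e1 : (1:ℝ) - t/(1+t) = (1+t)⁻¹ := by field_simp; ring
    have e2 : t/(1+t) = t * (1+t)⁻¹ := div_eq_mul_inv t _
    simp only [hg, hf, smul_eq_mul]
    rw [abs_of_pos (by positivity), e1, e2,
      Real.mul_rpow ht.le (by positivity), Real.inv_rpow h1.le, Real.inv_rpow h1.le,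
      ← Real.rpow_neg h1.le, ← Real.rpow_neg h1.le,
      show ((1+t)^2)⁻¹ = (1+t) ^ (-2 : ℝ) by
        rw [← Real.rpow_natCast (1+t) 2, ← Real.rpow_neg h1.le]; norm_num]
    have e3 : (1+t) ^ (-2:ℝ) * ((1+t) ^ (-(p-1)) * (1+t) ^ (-(q-1))) = (1+t) ^ (-(p+q)) := by
      rw [← Real.rpow_add h1, ← Real.rpow_add h1]
      congr 1
      ring
    calc (1+t) ^ (-2:ℝ) * (t ^ (p-1) * (1+t) ^ (-(p-1)) * (1+t) ^ (-(q-1)))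
        = t ^ (p-1) * ((1+t) ^ (-2:ℝ) * ((1+t) ^ (-(p-1)) * (1+t) ^ (-(q-1)))) := by ring
      _ = t ^ (p-1) * (1+t) ^ (-(p+q)) := by rw [e3]
  obtain ⟨hint, hval⟩ := realBeta hp hq
  have hii := (integrableOn_image_iff_integrableOn_abs_deriv_smul measurableSet_Ioi hf' hinj g)
  rw [himg] at hii
  have hIv := integral_image_eq_integral_abs_deriv_smul measurableSet_Ioi hf' hinj g
  rw [himg] at hIv
  constructor
  · exact ((hii.mp hint).congr_fun hpt measurableSet_Ioi)
  · rw [← hval, hIv]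
    exact (setIntegral_congr_fun measurableSet_Ioi hpt).symm

lemma sqSubst (g : ℝ → ℝ) :
    (IntegrableOn (fun ω : ℝ => 2*ω*g (ω^2)) (Ioi 0) ↔ IntegrableOn g (Ioi (0:ℝ))) ∧
    ∫ ω in Ioi (0:ℝ), 2*ω*g (ω^2) = ∫ t in Ioi (0:ℝ), g t := by
  set f : ℝ → ℝ := fun ω => ω^2 with hf
  have hf' : ∀ ω ∈ Ioi (0:ℝ), HasDerivWithinAt f (2*ω) (Ioi 0) ω := by
    intro ω hω
    have := hasDerivAt_pow 2 ω
    norm_num at this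
    exact this.hasDerivWithinAt
  have hinj : InjOn f (Ioi (0:ℝ)) := by
    intro x hx y hy h
    simp only [mem_Ioi] at hx hy
    simp only [hf] at h
    nlinarith
  have himg : f '' (Ioi (0:ℝ)) = Ioi (0:ℝ) := by
    ext y
    constructor
    · rintro ⟨t, ht, rfl⟩
      simp only [mem_Ioi] at *
      positivity
    · intro hy
      simp only [mem_Ioi] at hy
      exact ⟨Real.sqrt y, by simp [mem_Ioi, Real.sqrt_pos, hy],
        by simp [hf, Real.sq_sqrt hy.le]⟩
  have hpt : ∀ ω ∈ Ioi (0:ℝ), |2*ω| • g (f ω) = 2*ω*g (ω^2) := by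
    intro ω hω
    simp only [mem_Ioi] at hω
    rw [smul_eq_mul, abs_of_pos (by linarith)]
  have hii := integrableOn_image_iff_integrableOn_abs_deriv_smul measurableSet_Ioi hf' hinj g
  have hIv := integral_image_eq_integral_abs_deriv_smul measurableSet_Ioi hf' hinj g
  rw [himg] at hii hIv
  constructor
  · rw [integrableOn_congr_fun hpt measurableSet_Ioi] at hii
    exact hii.symm
  · rw [hIv]
    exact (setIntegral_congr_fun measurableSet_Ioi hpt).symm

lemma zform (a : ℤ) (u : ℤ → ℝ) (z : ℝ → ℤ → ℝ) (ω : ℝ) (hω : 0 < ω)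
    (hz0 : z ω a = 0)
    (hz : ∀ k : ℤ, a + 1 ≤ k → z ω k - z ω (k - 1) = -(ω ^ 2) * z ω k + u k) :
    ∀ k : ℤ, a ≤ k →
      z ω k = ∑ i ∈ Finset.range (k - a).toNat, u (k - i) * ((1+ω^2)⁻¹)^(i+1) := by
  have h1 : (0:ℝ) < 1 + ω^2 := by positivity
  have key : ∀ n : ℕ, z ω (a + n)
      = ∑ i ∈ Finset.range n, u (a + n - i) * ((1+ω^2)⁻¹)^(i+1) := by
    intro n
    induction n with
    | zero => simpa using hz0
    | succ n ih =>
        have hrec := hz (a + n + 1) (by omega)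
        have h2 : z ω (a + n + 1) = (z ω (a + n) + u (a + n + 1)) * (1+ω^2)⁻¹ := by
          rw [eq_mul_inv_iff_mul_eq₀ h1.ne']
          have e : (a + (n:ℤ) + 1 - 1) = a + n := by ring
          rw [e] at hrec
          nlinarith [hrec]
        have e2 : (a + ((n:ℕ)+1:ℕ) : ℤ) = a + n + 1 := by push_cast; ring
        rw [e2, h2, ih, Finset.sum_range_succ']
        have e3 : ∀ i : ℕ, u (a + n + 1 - (↑(i+1) : ℤ)) * ((1+ω^2)⁻¹)^(i+1+1)
            = (u (a + n - i) * ((1+ω^2)⁻¹)^(i+1)) * (1+ω^2)⁻¹ := by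
          intro i
          have e4 : (a + (n:ℤ) + 1 - (↑(i+1) : ℤ)) = a + n - i := by push_cast; ring
          rw [e4]
          ring
        rw [Finset.sum_congr rfl fun i _ => e3 i, ← Finset.sum_mul]
        push_cast
        rw [add_mul]
        norm_num
  intro k hk
  have hn : k = a + ((k - a).toNat : ℤ) := by omega
  have := key (k - a).toNat
  rw [← hn] at this
  exact this



/-- The `α`-th nabla fractional sum of `u : ℤ → ℝ` with initial instant `a`:
`{}_a∇_k^{-α} u(k) = ∑_{i=0}^{k-a-1} (Γ(α+i)/(Γ(α) Γ(i+1))) u(k−i)`. -/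
noncomputable def nablaFracSum (a : ℤ) (α : ℝ) (u : ℤ → ℝ) (k : ℤ) : ℝ :=
  ∑ i ∈ Finset.range (k - a).toNat,
    Real.Gamma (α + i) / (Real.Gamma α * Real.Gamma (i + 1)) * u (k - i)

/-- **Output-form bilateral frequency distributed model (positive frequencies).**
If for each `ω > 0`, `z(ω,·)` satisfies `z(ω,a) = 0` and
`z(ω,k) − z(ω,k−1) = −ω² z(ω,k) + u(k)` for `k ≥ a+1`, then for every `k ≥ a+1` the
function `ω ↦ ω μ_α(ω²) z(ω,k)` is integrable on `(0,∞)` and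
`2 ∫_0^∞ ω μ_α(ω²) z(ω,k) dω = {}_a∇_k^{-α} u(k)`, where `μ_α(ω) = sin(απ)/(π ω^α)`. -/
theorem bilateral_output_form_frequency_distributed_model
    (a : ℤ) (α : ℝ) (hα0 : 0 < α) (hα1 : α < 1) (u : ℤ → ℝ)
    (z : ℝ → ℤ → ℝ)
    (hz0 : ∀ ω : ℝ, 0 < ω → z ω a = 0)
    (hz : ∀ ω : ℝ, 0 < ω → ∀ k : ℤ, a + 1 ≤ k →
      z ω k - z ω (k - 1) = -(ω ^ 2) * z ω k + u k) :
    ∀ k : ℤ, a + 1 ≤ k →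
      MeasureTheory.IntegrableOn
        (fun ω : ℝ => ω * (Real.sin (α * Real.pi) / (Real.pi * (ω ^ 2) ^ α)) * z ω k)
        (Set.Ioi (0 : ℝ)) ∧
      2 * (∫ ω in Set.Ioi (0 : ℝ),
          ω * (Real.sin (α * Real.pi) / (Real.pi * (ω ^ 2) ^ α)) * z ω k) =
        nablaFracSum a α u k := by
  intro k hk
  set n := (k - a).toNat with hn
  set c : ℝ := Real.sin (α * Real.pi) / (2 * Real.pi) with hc
  -- the beta-type integrand for each i
  set gI : ℕ → ℝ → ℝ := fun i t => t ^ (-α) * (1+t) ^ (-((i:ℝ)+1)) with hgI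
  have hbeta : ∀ i : ℕ, IntegrableOn (gI i) (Ioi (0:ℝ)) ∧
      ∫ t in Ioi (0:ℝ), gI i t
        = Real.Gamma (1-α) * Real.Gamma (i+α) / Real.Gamma ((i:ℝ)+1) := by
    intro i
    have hp : (0:ℝ) < 1 - α := by linarith
    have hq : (0:ℝ) < i + α := by positivity
    obtain ⟨h1, h2⟩ := betaIoi hp hq
    have he : (fun t : ℝ => t ^ ((1-α)-1) * (1+t) ^ (-((1-α)+((i:ℝ)+α)))) = gI i := by
      funext t
      rw [show (1-α)-1 = -α by ring, show -((1-α)+((i:ℝ)+α)) = -((i:ℝ)+1) by ring]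
    have hΓ : (1-α) + ((i:ℝ)+α) = (i:ℝ)+1 := by ring
    rw [he] at h1 h2
    rw [hΓ] at h2
    exact ⟨h1, h2⟩
  -- T i : the per-term integrand in ω
  set T : ℕ → ℝ → ℝ := fun i ω =>
    ω * (Real.sin (α * Real.pi) / (Real.pi * (ω ^ 2) ^ α)) * ((1+ω^2)⁻¹)^(i+1) with hT
  have hTeq : ∀ i : ℕ, ∀ ω ∈ Ioi (0:ℝ), c * (2*ω*(gI i (ω^2))) = T i ω := by
    intro i ω hω
    simp only [mem_Ioi] at hω
    have h1 : (0:ℝ) < 1 + ω^2 := by positivity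
    have h2 : (0:ℝ) < ω^2 := by positivity
    have e1 : ((1+ω^2):ℝ) ^ (-((i:ℝ)+1)) = ((1+ω^2)⁻¹)^(i+1) := by
      rw [show ((i:ℝ)+1) = ((i+1:ℕ):ℝ) by push_cast; ring, Real.rpow_neg h1.le,
        Real.rpow_natCast, inv_pow]
    have e2 : (ω^2) ^ (-α) = ((ω^2) ^ α)⁻¹ := Real.rpow_neg h2.le α
    have e3 : (0:ℝ) < (ω^2) ^ α := Real.rpow_pos_of_pos h2 α
    simp only [hgI, hT, hc, e1, e2]
    field_simp
  have hTint : ∀ i : ℕ, IntegrableOn (T i) (Ioi (0:ℝ)) ∧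
      ∫ ω in Ioi (0:ℝ), T i ω
        = c * (Real.Gamma (1-α) * Real.Gamma (i+α) / Real.Gamma ((i:ℝ)+1)) := by
    intro i
    obtain ⟨hg1, hg2⟩ := hbeta i
    obtain ⟨hs1, hs2⟩ := sqSubst (gI i)
    have hint : IntegrableOn (fun ω : ℝ => c * (2*ω*(gI i (ω^2)))) (Ioi (0:ℝ)) :=
      (hs1.mpr hg1).const_mul c
    constructor
    · exact hint.congr_fun (hTeq i) measurableSet_Ioi
    · rw [← setIntegral_congr_fun measurableSet_Ioi (hTeq i), MeasureTheory.integral_const_mul, hs2, hg2]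
  -- closed form of z
  have hzf : ∀ ω ∈ Ioi (0:ℝ), (fun ω : ℝ =>
      ω * (Real.sin (α * Real.pi) / (Real.pi * (ω ^ 2) ^ α)) * z ω k) ω
      = ∑ i ∈ Finset.range n, u (k-i) * T i ω := by
    intro ω hω
    simp only [mem_Ioi] at hω
    dsimp only
    rw [zform a u z ω hω (hz0 ω hω) (hz ω hω) k (by omega)]
    simp only [hT, ← hn]
    rw [Finset.mul_sum]
    refine Finset.sum_congr rfl fun i _ => ?_
    ring
  have hSint : IntegrableOn (fun ω => ∑ i ∈ Finset.range n, u (k-i) * T i ω) (Ioi (0:ℝ)) :=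
    integrable_finset_sum _ fun i _ => ((hTint i).1.const_mul (u (k-i)))
  constructor
  · exact hSint.congr_fun (fun ω hω => (hzf ω hω).symm) measurableSet_Ioi
  · rw [setIntegral_congr_fun measurableSet_Ioi hzf, integral_finset_sum _
      (fun i _ => ((hTint i).1.const_mul (u (k-i))))]
    simp_rw [MeasureTheory.integral_const_mul]
    rw [nablaFracSum, Finset.mul_sum, ← hn]
    refine Finset.sum_congr rfl fun i _ => ?_
    rw [(hTint i).2]
    have hΓα : (0:ℝ) < Real.Gamma α := Real.Gamma_pos_of_pos hα0
    have hsin : (0:ℝ) < Real.sin (α * Real.pi) := by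
      apply Real.sin_pos_of_pos_of_lt_pi
      · positivity
      · nlinarith [Real.pi_pos]
    have hrefl := Real.Gamma_mul_Gamma_one_sub α
    rw [mul_comm Real.pi α] at hrefl
    have hΓi : (0:ℝ) < Real.Gamma ((i:ℝ)+1) := by
      apply Real.Gamma_pos_of_pos; positivity
    have hπ : (0:ℝ) < Real.pi := Real.pi_pos
    have key' : Real.sin (α*Real.pi) * Real.Gamma (1-α) * Real.Gamma α = Real.pi := by
      field_simp at hrefl
      linear_combination hrefl
    have key2 : 2 * c * Real.Gamma (1-α) = (Real.Gamma α)⁻¹ := by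
      rw [hc]
      field_simp
      linear_combination key'
    rw [show Real.Gamma (α + i) = Real.Gamma ((i:ℝ) + α) by rw [add_comm]]
    calc 2 * (u (k - (i:ℤ)) * (c * (Real.Gamma (1-α) * Real.Gamma ((i:ℝ)+α) / Real.Gamma ((i:ℝ)+1))))
        = (2 * c * Real.Gamma (1-α)) * (Real.Gamma ((i:ℝ)+α) / Real.Gamma ((i:ℝ)+1)) * u (k - (i:ℤ)) := by
          ring
      _ = Real.Gamma ((i:ℝ)+α) / (Real.Gamma α * Real.Gamma ((i:ℝ)+1)) * u (k - (i:ℤ)) := by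
          rw [key2]
          field_simp
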